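/- Univariate TCE for spherical (elliptical) variables: let Z have density f(z) = c·g(z²/2) with density generator g satisfying ∫₀^∞ g(u)du < ∞, and let M = m + s·Z with s > 0. Then for y_q with P(M > y_q) > 0, E[M | M > y_q] = m + s² · (c/s) · Ḡ(z_q²/2) / P(Z > z_q), where z_q = (y_q − m)/s and Ḡ(u) = ∫_u^∞ g(v)dv. -/

import Mathlib

open MeasureTheory
open scoped NNReal ENNReal

-- substitution lemma
lemma subst_half_sq (g : ℝ → ℝ) (a : ℝ) (ha : 0 ≤ a) :
    ∫ v in Set.Ioi (a^2/2), g v = ∫ z in Set.Ioi a, z * g (z^2/2) := by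
  have himg : (fun z : ℝ => z^2/2) '' Set.Ioi a = Set.Ioi (a^2/2) := by
    ext v
    constructor
    · rintro ⟨z, hz, rfl⟩
      simp only [Set.mem_Ioi] at hz ⊢
      nlinarith
    · intro hv
      simp only [Set.mem_Ioi] at hv
      refine ⟨Real.sqrt (2*v), ?_, ?_⟩
      · simp only [Set.mem_Ioi]
        have h2 : a^2 < 2*v := by linarith
        exact (Real.lt_sqrt ha).mpr h2
      · have h0 : 0 ≤ 2*v := by nlinarith
        have := Real.sq_sqrt h0
        dsimp only
        rw [this]
        ring
  have hderiv : ∀ x ∈ Set.Ioi a, HasDerivWithinAt (fun z : ℝ => z^2/2) x (Set.Ioi a) x := by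
    intro x _
    have h := (hasDerivAt_pow 2 x).div_const 2
    norm_num at h
    exact h.hasDerivWithinAt
  have hinj : Set.InjOn (fun z : ℝ => z^2/2) (Set.Ioi a) := by
    intro x hx y hy hxy
    simp only [Set.mem_Ioi] at hx hy
    have hx0 : 0 ≤ x := le_trans ha hx.le
    have hy0 : 0 ≤ y := le_trans ha hy.le
    have h2 : x^2 = y^2 := by dsimp at hxy; linarith
    calc x = Real.sqrt (x^2) := (Real.sqrt_sq hx0).symm
    _ = Real.sqrt (y^2) := by rw [h2]
    _ = y := Real.sqrt_sq hy0
  rw [← himg, integral_image_eq_integral_abs_deriv_smul measurableSet_Ioi hderiv hinj g]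
  refine setIntegral_congr_fun measurableSet_Ioi fun x hx => ?_
  simp only [Set.mem_Ioi] at hx
  rw [abs_of_nonneg (le_trans ha hx.le), smul_eq_mul]

-- odd integral lemma
lemma odd_setIntegral_zero (f : ℝ → ℝ) (hodd : ∀ x, f (-x) = - f x) (b : ℝ) (hb : 0 ≤ b)
    (hint : IntegrableOn f (Set.Ioc (-b) b)) : ∫ x in Set.Ioc (-b) b, f x = 0 := by
  have hle : (-b : ℝ) ≤ b := by linarith
  have hii : IntervalIntegrable f volume (-b) b := by
    rw [intervalIntegrable_iff_integrableOn_Ioc_of_le hle]; exact hint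
  have h1 : ∫ x in Set.Ioc (-b) b, f x = ∫ x in (-b)..b, f x :=
    (intervalIntegral.integral_of_le hle).symm
  have hi1 : IntervalIntegrable f volume (-b) 0 := hii.mono_set (by rw [Set.uIcc_of_le (by linarith : (-b:ℝ) ≤ 0), Set.uIcc_of_le hle]; exact Set.Icc_subset_Icc le_rfl hb)
  have hi2 : IntervalIntegrable f volume 0 b := hii.mono_set (by rw [Set.uIcc_of_le hb, Set.uIcc_of_le hle]; exact Set.Icc_subset_Icc (by linarith) le_rfl)
  have hsplit : ∫ x in (-b)..b, f x = (∫ x in (-b)..(0:ℝ), f x) + ∫ x in (0:ℝ)..b, f x :=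
    (intervalIntegral.integral_add_adjacent_intervals hi1 hi2).symm
  have hneg : ∫ x in (-b)..(0:ℝ), f x = - ∫ x in (0:ℝ)..b, f x := by
    have := intervalIntegral.integral_comp_neg (a := (0:ℝ)) (b := b) (f := f)
    simp only [neg_zero] at this
    rw [← this]
    rw [intervalIntegral.integral_congr (g := fun x => - f x) (fun x _ => hodd x)]
    simp [intervalIntegral.integral_neg]
  rw [h1, hsplit, hneg]; ring

lemma key_integral (g : ℝ → ℝ) (a : ℝ)
    (hint : Integrable (fun z => z * g (z^2/2)) volume) :
    ∫ z in Set.Ioi a, z * g (z^2/2) = ∫ v in Set.Ioi (a^2/2), g v := by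
  rcases le_or_gt 0 a with ha | ha
  · exact (subst_half_sq g a ha).symm
  · have hb0 : (0:ℝ) ≤ -a := by linarith
    have hunion : Set.Ioc a (-a) ∪ Set.Ioi (-a) = Set.Ioi a :=
      Set.Ioc_union_Ioi_eq_Ioi (by linarith)
    rw [← hunion, setIntegral_union Set.Ioc_disjoint_Ioi_same measurableSet_Ioi
      hint.integrableOn hint.integrableOn]
    have hodd : ∀ x : ℝ, (-x) * g ((-x)^2/2) = -(x * g (x^2/2)) := fun x => by
      rw [neg_sq]; ring
    have hzero : ∫ z in Set.Ioc a (-a), z * g (z^2/2) = 0 := by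
      have h := odd_setIntegral_zero (fun z => z * g (z^2/2)) hodd (-a) hb0 hint.integrableOn
      rwa [neg_neg] at h
    have hsq : (-a)^2 = a^2 := neg_sq a
    rw [hzero, zero_add, ← subst_half_sq g (-a) hb0, hsq]

theorem tce_univariate_elliptical {Ω : Type*} [MeasurableSpace Ω]
    (μ : Measure Ω) [IsProbabilityMeasure μ] (g : ℝ → ℝ) (hgm : Measurable g)
    (hg_nonneg : ∀ u, 0 ≤ u → 0 ≤ g u)
    (hg_int : IntegrableOn g (Set.Ioi 0))
    (hg_moment : IntegrableOn (fun u => u ^ (-(1:ℝ)/2) * g u) (Set.Ioi 0))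
    (c : ℝ) (hc : 0 < c)
    (Z : Ω → ℝ) (hZm : Measurable Z)
    (hZ : Measure.map Z μ
      = volume.withDensity (fun z => ENNReal.ofReal (c * g (z ^ 2 / 2))))
    (m s : ℝ) (hs : 0 < s) (M : Ω → ℝ) (hM : ∀ ω, M ω = m + s * Z ω)
    (hMint : Integrable M μ) (y_q : ℝ)
    (hpos : 0 < (μ {ω | M ω > y_q}).toReal) :
    (∫ ω in {ω | M ω > y_q}, M ω ∂μ) / (μ {ω | M ω > y_q}).toReal
      = m + s ^ 2 * ((c / s) * (∫ v in Set.Ioi (((y_q - m) / s) ^ 2 / 2), g v)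
            / (μ {ω | Z ω > (y_q - m) / s}).toReal) := by
  have hsne : s ≠ 0 := hs.ne'
  set z_q : ℝ := (y_q - m) / s with hzq
  have hset : {ω | M ω > y_q} = Z ⁻¹' (Set.Ioi z_q) := by
    ext ω
    simp only [Set.mem_setOf_eq, Set.mem_preimage, Set.mem_Ioi, gt_iff_lt, hM, hzq]
    rw [div_lt_iff₀ hs]
    constructor <;> intro h <;> nlinarith
  have hZset : {ω | Z ω > z_q} = Z ⁻¹' (Set.Ioi z_q) := rfl
  have hSm : MeasurableSet (Z ⁻¹' (Set.Ioi z_q)) := hZm measurableSet_Ioi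
  rw [hset] at hpos ⊢
  rw [hZset]
  set P := (μ (Z ⁻¹' Set.Ioi z_q)).toReal with hPdef
  have hPne : P ≠ 0 := hpos.ne'
  -- Z is integrable
  have hZint : Integrable Z μ := by
    have h1 : Integrable (fun ω => (M ω - m) * s⁻¹) μ :=
      (hMint.sub (integrable_const m)).mul_const _
    exact h1.congr (Filter.Eventually.of_forall fun ω => by show (M ω - m) * s⁻¹ = Z ω; rw [hM]; field_simp; ring)
  -- density facts
  have hd : ∀ z : ℝ, 0 ≤ c * g (z ^ 2 / 2) := fun z =>
    mul_nonneg hc.le (hg_nonneg _ (by positivity))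
  set w : ℝ → ℝ≥0 := fun z => (c * g (z ^ 2 / 2)).toNNReal with hw
  have hwm : Measurable w :=
    ((hgm.comp ((measurable_id.pow_const 2).div_const 2)).const_mul c).real_toNNReal
  have hZmap : Measure.map Z μ = volume.withDensity (fun z => (w z : ℝ≥0∞)) := by
    rw [hZ]; rfl
  have hid : Integrable (fun z : ℝ => z) (Measure.map Z μ) := by
    rw [integrable_map_measure measurable_id'.aestronglyMeasurable hZm.aemeasurable]
    exact hZint
  have hφ : Integrable (fun z => (w z : ℝ) * z) volume := by
    rw [hZmap] at hid
    have h := (integrable_withDensity_iff_integrable_smul₀ hwm.aemeasurable).mp hid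
    simpa [NNReal.smul_def] using h
  have hφ' : Integrable (fun z => z * g (z ^ 2 / 2)) volume := by
    have h2 : Integrable (fun z => c⁻¹ * ((w z : ℝ) * z)) volume := hφ.const_mul _
    refine h2.congr (Filter.Eventually.of_forall fun z => ?_)
    simp only [hw, Real.coe_toNNReal _ (hd z)]
    field_simp
  -- compute the set integral of Z
  have hI : ∫ ω in Z ⁻¹' Set.Ioi z_q, Z ω ∂μ = c * ∫ v in Set.Ioi (z_q ^ 2 / 2), g v := by
    have h1 : ∫ ω in Z ⁻¹' Set.Ioi z_q, Z ω ∂μ = ∫ z in Set.Ioi z_q, z ∂(Measure.map Z μ) :=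
      (setIntegral_map measurableSet_Ioi measurable_id.aestronglyMeasurable
        hZm.aemeasurable).symm
    rw [h1, hZmap, restrict_withDensity measurableSet_Ioi,
      integral_withDensity_eq_integral_smul hwm]
    have h2 : ∫ z in Set.Ioi z_q, w z • z = ∫ z in Set.Ioi z_q, c * (z * g (z ^ 2 / 2)) := by
      refine setIntegral_congr_fun measurableSet_Ioi fun z _ => ?_
      rw [NNReal.smul_def, hw]
      dsimp only
      rw [Real.coe_toNNReal _ (hd z), smul_eq_mul]
      ring
    rw [h2, integral_const_mul, key_integral g z_q hφ']
  -- numerator split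
  have hnum : ∫ ω in Z ⁻¹' Set.Ioi z_q, M ω ∂μ
      = m * P + s * ∫ ω in Z ⁻¹' Set.Ioi z_q, Z ω ∂μ := by
    calc ∫ ω in Z ⁻¹' Set.Ioi z_q, M ω ∂μ
        = ∫ ω in Z ⁻¹' Set.Ioi z_q, (m + s * Z ω) ∂μ :=
          setIntegral_congr_fun hSm fun ω _ => hM ω
      _ = (∫ _ω in Z ⁻¹' Set.Ioi z_q, m ∂μ) + ∫ ω in Z ⁻¹' Set.Ioi z_q, s * Z ω ∂μ :=
          integral_add (integrable_const m) (hZint.const_mul s).integrableOn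
      _ = m * P + s * ∫ ω in Z ⁻¹' Set.Ioi z_q, Z ω ∂μ := by
          rw [setIntegral_const, integral_const_mul, smul_eq_mul, mul_comm, measureReal_def]
  rw [hnum, hI]
  field_simp
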